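/- arXiv:0710.5594 — 2 statements merged into one kernel-verified Lean document; each statement's English description precedes it below -/
import Mathlib

section
/- Let q = 2 and assume ∫ ‖x‖² K(dx) < ∞. If (β₂, Y₂) ∈ A_2 minimizes k_2 over A_2, then for every φ ∈ ℝ^d and every Ψ ∈ L²(K) such that |Ψ(x)| ≤ a·Y₂(x) K-a.e. for some a > 0 and c·φ + ∫ Ψ(x)·x K(dx) = 0, the first-order condition β₂ᵀcφ + ∫ Ψ(x)(Y₂(x) − 1) K(dx) = 0 holds. -/
open MeasureTheory
open scoped ENNReal RealInnerProductSpace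

noncomputable section

/-- `ℝ^d` with the Euclidean norm. -/
abbrev E (d : ℕ) := EuclideanSpace ℝ (Fin d)

/-- The truncation function `h(x) = x · 1_{‖x‖ ≤ 1}`. -/
def trunc {d : ℕ} (x : E d) : E d := if ‖x‖ ≤ 1 then x else 0

/-- Action of a `d × d` matrix on a vector of `ℝ^d`. -/
def mv {d : ℕ} (c : Matrix (Fin d) (Fin d) ℝ) (v : E d) : E d :=
  (WithLp.equiv 2 (Fin d → ℝ)).symm (c.mulVec (WithLp.equiv 2 (Fin d → ℝ) v))

/-- `K` is a Lévy measure: `K({0}) = 0` and `∫ min(1,‖x‖²) K(dx) < ∞`. -/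
def IsLevyMeasure {d : ℕ} (K : Measure (E d)) : Prop :=
  K {0} = 0 ∧ ∫⁻ x, ENNReal.ofReal (min 1 (‖x‖ ^ 2)) ∂K < ⊤

/-- `g_q(y) = y^q - 1 - q(y-1)` (real exponent `q`). -/
def gq (q y : ℝ) : ℝ := y ^ q - 1 - q * (y - 1)

/-- `k_q(β, Y) = (q(q-1)/2) βᵀcβ + ∫ g_q(Y(x)) K(dx)`. -/
def kq {d : ℕ} (q : ℝ) (c : Matrix (Fin d) (Fin d) ℝ) (K : Measure (E d))
    (β : E d) (Y : E d → ℝ) : ℝ :=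
  q * (q - 1) / 2 * ⟪β, mv c β⟫ + ∫ x, gq q (Y x) ∂K

/-- The martingale condition `(M)`:
`∫ ‖x Y(x) - h(x)‖ K(dx) < ∞` and `b + cβ + ∫ (x Y(x) - h(x)) K(dx) = 0`. -/
def MCond {d : ℕ} (b : E d) (c : Matrix (Fin d) (Fin d) ℝ) (K : Measure (E d))
    (β : E d) (Y : E d → ℝ) : Prop :=
  Integrable (fun x => Y x • x - trunc x) K ∧
  b + mv c β + ∫ x, (Y x • x - trunc x) ∂K = 0

/-- Membership in the admissible set `A_q`: `Y` is measurable, `Y > 0` `K`-a.e.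
(recall that functions which agree `K`-a.e. are identified), `(β,Y)` satisfies the
martingale condition `(M)`, and `∫ g_q(Y(x)) K(dx) < ∞`, i.e. `k_q(β,Y) < ∞`. -/
def memA {d : ℕ} (q : ℝ) (b : E d) (c : Matrix (Fin d) (Fin d) ℝ)
    (K : Measure (E d)) (β : E d) (Y : E d → ℝ) : Prop :=
  Measurable Y ∧ (∀ᵐ x ∂K, 0 < Y x) ∧ MCond b c K β Y ∧
  ∫⁻ x, ENNReal.ofReal (gq q (Y x)) ∂K < ⊤

lemma gq_two (y : ℝ) : gq 2 y = (y - 1)^2 := by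
  unfold gq
  rw [show ((2:ℝ)) = ((2:ℕ):ℝ) by norm_num, Real.rpow_natCast]; ring

lemma mv_add {d : ℕ} (c : Matrix (Fin d) (Fin d) ℝ) (u v : E d) :
    mv c (u + v) = mv c u + mv c v := by
  unfold mv; ext i; simp [Matrix.mulVec_add]

lemma mv_smul {d : ℕ} (c : Matrix (Fin d) (Fin d) ℝ) (t : ℝ) (v : E d) :
    mv c (t • v) = t • mv c v := by
  unfold mv; ext i; simp [Matrix.mulVec_smul]

lemma inner_mv_symm {d : ℕ} {c : Matrix (Fin d) (Fin d) ℝ} (hsym : c.IsSymm)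
    (u v : E d) : ⟪u, mv c v⟫ = ⟪v, mv c u⟫ := by
  simp only [mv, PiLp.inner_apply, RCLike.inner_apply, conj_trivial]
  simp only [WithLp.equiv_symm_apply, PiLp.toLp_apply, Matrix.mulVec, dotProduct,
    WithLp.equiv_apply, Finset.sum_mul]
  rw [Finset.sum_comm]
  refine Finset.sum_congr rfl fun i _ => Finset.sum_congr rfl fun j _ => ?_
  rw [hsym.apply i j]; ring

lemma inner_mv_nonneg {d : ℕ} {c : Matrix (Fin d) (Fin d) ℝ} (hpsd : c.PosSemidef)
    (v : E d) : 0 ≤ ⟪v, mv c v⟫ := by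
  have := hpsd.dotProduct_mulVec_nonneg (WithLp.equiv 2 (Fin d → ℝ) v)
  simpa [mv, PiLp.inner_apply, dotProduct, Matrix.mulVec, mul_comm] using this

/-- **First-order condition (3.4)**: if `∫ ‖x‖² K(dx) < ∞` and `(β₂, Y₂)` minimizes
`k₂` over `A₂`, then for every `φ ∈ ℝ^d` and every `Ψ ∈ L²(K)` with `|Ψ| ≤ a Y₂`
`K`-a.e. for some `a > 0` and `cφ + ∫ Ψ(x) x K(dx) = 0`, one has
`β₂ᵀcφ + ∫ Ψ(x)(Y₂(x) - 1) K(dx) = 0`. -/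
theorem stmt6 (d : ℕ) (hd : 1 ≤ d)
    (b : E d) (c : Matrix (Fin d) (Fin d) ℝ) (hsym : c.IsSymm) (hpsd : c.PosSemidef)
    (K : Measure (E d)) (hK : IsLevyMeasure K)
    (hsq : Integrable (fun x => ‖x‖ ^ 2) K)
    (β₂ : E d) (Y₂ : E d → ℝ)
    (hmem : memA 2 b c K β₂ Y₂)
    (hmin : ∀ β Y, memA 2 b c K β Y → kq 2 c K β₂ Y₂ ≤ kq 2 c K β Y)
    (φ : E d) (Ψ : E d → ℝ) (hΨ : MemLp Ψ 2 K)
    (hbd : ∃ a > 0, ∀ᵐ x ∂K, |Ψ x| ≤ a * Y₂ x)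
    (hconstraint : mv c φ + ∫ x, Ψ x • x ∂K = 0) :
    ⟪β₂, mv c φ⟫ + ∫ x, Ψ x * (Y₂ x - 1) ∂K = 0 := by
  obtain ⟨a, ha, habd⟩ := hbd
  obtain ⟨hY₂m, hY₂pos, ⟨hMint, hMeq⟩, hfin⟩ := hmem
  -- measurable representative of Ψ
  set Ψ' : E d → ℝ := (hΨ.1.mk Ψ) with hΨ'def
  have hΨ'sm : StronglyMeasurable Ψ' := hΨ.1.stronglyMeasurable_mk
  have hΨ'm : Measurable Ψ' := hΨ'sm.measurable
  have hae : Ψ =ᵐ[K] Ψ' := hΨ.1.ae_eq_mk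
  have hΨ'2 : MemLp Ψ' 2 K := hΨ.ae_eq hae
  set f : E d → ℝ := fun x => Y₂ x - 1 with hfdef
  have hfm : Measurable f := hY₂m.sub measurable_const
  -- f ∈ L²
  have hfsq : Integrable (fun x => f x ^ 2) K := by
    refine ⟨(hfm.pow_const 2).aestronglyMeasurable, ?_⟩
    unfold HasFiniteIntegral
    have heq : ∀ x, ‖f x ^ 2‖ₑ = ENNReal.ofReal (gq 2 (Y₂ x)) := by
      intro x
      rw [gq_two, ← ofReal_norm, Real.norm_eq_abs,
        abs_of_nonneg (sq_nonneg (f x))]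
    simp only [heq]; exact hfin
  have hf2 : MemLp f 2 K :=
    (memLp_two_iff_integrable_sq hfm.aestronglyMeasurable).2 hfsq
  have hΨsq : Integrable (fun x => Ψ x ^ 2) K :=
    (memLp_two_iff_integrable_sq hΨ.1).1 hΨ
  have hΨ'sq : Integrable (fun x => Ψ' x ^ 2) K :=
    hΨsq.congr (by filter_upwards [hae] with x h; rw [h])
  have hone : (1 : ℝ≥0∞) / 1 = 1 / 2 + 1 / 2 := by
    rw [one_div, one_div, inv_one, ENNReal.inv_two_add_inv_two]
  have hΨf : Integrable (fun x => Ψ x * f x) K := by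
    have := (hf2.smul hΨ : MemLp (Ψ • f) 1 K)
    exact memLp_one_iff_integrable.1 this
  have hΨ'f : Integrable (fun x => Ψ' x * f x) K :=
    hΨf.congr (by filter_upwards [hae] with x h; rw [h])
  -- x ∈ L² (vector valued)
  have hid2 : MemLp (fun x : E d => x) 2 K := by
    refine (memLp_two_iff_integrable_sq_norm aestronglyMeasurable_id).2 ?_
    simpa using hsq
  have hΨx : Integrable (fun x => Ψ x • x) K := by
    have := (hid2.smul hΨ : MemLp (Ψ • fun x : E d => x) 1 K)
    exact memLp_one_iff_integrable.1 this
  have hΨ'x : Integrable (fun x => Ψ' x • x) K :=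
    hΨx.congr (by filter_upwards [hae] with x h; rw [h])
  -- the two key constants
  set A : ℝ := ⟪β₂, mv c φ⟫ + ∫ x, Ψ x * (Y₂ x - 1) ∂K with hAdef
  set B : ℝ := ⟪φ, mv c φ⟫ + ∫ x, Ψ x ^ 2 ∂K with hBdef
  have hB : 0 ≤ B := by
    have h1 := inner_mv_nonneg hpsd φ
    have h2 : 0 ≤ ∫ x, Ψ x ^ 2 ∂K := integral_nonneg fun x => sq_nonneg _
    linarith
  -- main inequality for small ε
  have key : ∀ ε : ℝ, |ε| ≤ 1 / (2 * a) → 0 ≤ 2 * ε * A + ε ^ 2 * B := by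
    intro ε hε
    set Yε : E d → ℝ := fun x => Y₂ x + ε * Ψ' x with hYεdef
    set βε : E d := β₂ + ε • φ with hβεdef
    have hsmint : Integrable (fun x => ε • (Ψ' x • x)) K := hΨ'x.smul ε
    have heqM : (fun x => Yε x • x - trunc x)
        = fun x => (Y₂ x • x - trunc x) + ε • (Ψ' x • x) := by
      funext x; simp only [hYεdef]; rw [add_smul]; rw [smul_smul]; abel
    have hmemε : memA 2 b c K βε Yε := by
      refine ⟨hY₂m.add (measurable_const.mul hΨ'm), ?_, ⟨?_, ?_⟩, ?_⟩
      · filter_upwards [hY₂pos, habd, hae] with x h1 h2 h3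
        have h4 : |ε * Ψ' x| ≤ (1 / (2 * a)) * (a * Y₂ x) := by
          rw [abs_mul, ← h3]
          exact mul_le_mul hε h2 (abs_nonneg _) (by positivity)
        have hh : |ε * Ψ' x| ≤ Y₂ x / 2 := by
          calc |ε * Ψ' x| ≤ 1 / (2 * a) * (a * Y₂ x) := h4
          _ = Y₂ x / 2 := by field_simp
        have := neg_abs_le (ε * Ψ' x)
        simp only [hYεdef]; nlinarith
      · rw [heqM]; exact hMint.add hsmint
      · rw [heqM, integral_add hMint hsmint, integral_smul]
        have hint_eq : ∫ x, Ψ' x • x ∂K = ∫ x, Ψ x • x ∂K :=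
          integral_congr_ae (by filter_upwards [hae] with x h; rw [h])
        rw [hβεdef, mv_add, mv_smul, hint_eq]
        calc b + (mv c β₂ + ε • mv c φ) + ((∫ x, (Y₂ x • x - trunc x) ∂K) + ε • ∫ x, Ψ x • x ∂K)
            = (b + mv c β₂ + ∫ x, (Y₂ x • x - trunc x) ∂K)
              + ε • (mv c φ + ∫ x, Ψ x • x ∂K) := by module
          _ = 0 := by rw [hMeq, hconstraint]; simp
      · -- finiteness of ∫ gq 2 (Yε)
        have hsum2 : MemLp (fun x => f x + ε * Ψ' x) 2 K :=
          hf2.add (hΨ'2.const_mul ε)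
        have hint : Integrable (fun x => (f x + ε * Ψ' x) ^ 2) K :=
          (memLp_two_iff_integrable_sq hsum2.1).1 hsum2
        have hfi := hint.2
        unfold HasFiniteIntegral at hfi
        have heq : ∀ x, ENNReal.ofReal (gq 2 (Yε x)) = ‖(f x + ε * Ψ' x) ^ 2‖ₑ := by
          intro x
          rw [gq_two, ← ofReal_norm]
          congr 1
          rw [Real.norm_eq_abs, abs_of_nonneg (sq_nonneg _)]
          simp only [hYεdef, hfdef]; ring
        simp only [heq]; exact hfi
    have hle := hmin βε Yε hmemε
    -- compute kq at (βε, Yε)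
    have hquad : ⟪βε, mv c βε⟫
        = ⟪β₂, mv c β₂⟫ + 2 * ε * ⟪β₂, mv c φ⟫ + ε ^ 2 * ⟪φ, mv c φ⟫ := by
      rw [hβεdef, mv_add, mv_smul]
      simp only [inner_add_left, inner_add_right, real_inner_smul_left, real_inner_smul_right]
      rw [inner_mv_symm hsym φ β₂]
      ring
    have hintq : ∫ x, gq 2 (Yε x) ∂K
        = (∫ x, gq 2 (Y₂ x) ∂K) + 2 * ε * (∫ x, Ψ x * f x ∂K)
          + ε ^ 2 * ∫ x, Ψ x ^ 2 ∂K := by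
      have hgy : Integrable (fun x => gq 2 (Y₂ x)) K := by
        have h : (fun x => gq 2 (Y₂ x)) = fun x => f x ^ 2 := by
          funext x; rw [gq_two]
        rw [h]; exact hfsq
      have heq : (fun x => gq 2 (Yε x))
          = fun x => (gq 2 (Y₂ x) + (2 * ε) * (Ψ' x * f x)) + ε ^ 2 * Ψ' x ^ 2 := by
        funext x; rw [gq_two, gq_two]; simp only [hYεdef, hfdef]; ring
      have i2 : Integrable (fun x => (2 * ε) * (Ψ' x * f x)) K := (hΨ'f).const_mul (2*ε)
      have i3 : Integrable (fun x => ε ^ 2 * Ψ' x ^ 2) K := hΨ'sq.const_mul _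
      have i1 : Integrable (fun x => gq 2 (Y₂ x) + (2 * ε) * (Ψ' x * f x)) K := hgy.add i2
      rw [heq]
      rw [integral_add i1 i3, integral_add hgy i2, integral_const_mul, integral_const_mul]
      have e1 : ∫ x, Ψ' x * f x ∂K = ∫ x, Ψ x * f x ∂K :=
        integral_congr_ae (by filter_upwards [hae] with x h; rw [h])
      have e2 : ∫ x, Ψ' x ^ 2 ∂K = ∫ x, Ψ x ^ 2 ∂K :=
        integral_congr_ae (by filter_upwards [hae] with x h; rw [h])
      rw [e1, e2]
    have hkq : kq 2 c K βε Yε = kq 2 c K β₂ Y₂ + 2 * ε * A + ε ^ 2 * B := by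
      unfold kq
      rw [hquad, hintq, hAdef, hBdef]
      simp only [hfdef]
      ring
    rw [hkq] at hle
    linarith
  -- conclude A = 0
  by_contra hA
  have hA' : 0 < |A| := abs_pos.mpr hA
  set t : ℝ := min (1 / (2 * a)) (|A| / (B + 1)) with htdef
  have ht : 0 < t := lt_min (by positivity) (by positivity)
  have ht1 : t ≤ 1 / (2 * a) := min_le_left _ _
  have ht2 : t ≤ |A| / (B + 1) := min_le_right _ _
  have htB : t * B ≤ |A| := by
    have h1 : t * (B + 1) ≤ |A| := by
      rw [← le_div_iff₀ (by linarith : (0:ℝ) < B + 1)]; exact ht2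
    nlinarith
  set ε : ℝ := if 0 < A then -t else t with hεdef
  have hεabs : |ε| ≤ 1 / (2 * a) := by
    have h : |ε| = t := by
      rw [hεdef]; split
      · rw [abs_neg, abs_of_pos ht]
      · rw [abs_of_pos ht]
    rw [h]; exact ht1
  have hkey := key ε hεabs
  have hεA : 2 * ε * A = -(2 * t * |A|) := by
    rw [hεdef]; split
    · rename_i h; rw [abs_of_pos h]; ring
    · rename_i h; push_neg at h
      rcases lt_or_eq_of_le h with h' | h'
      · rw [abs_of_neg h']; ring
      · exact absurd h' hA
  have hε2 : ε ^ 2 = t ^ 2 := by rw [hεdef]; split <;> ring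
  rw [hεA, hε2] at hkey
  nlinarith [mul_le_mul_of_nonneg_left htB ht.le]
end
end

section
/- For every q ∈ I := (−∞,0) ∪ (1,∞) there exists a constant C = C(q) > 0 such that min((y−1)², |y−1|) ≤ C·g_q(y) for all y > 0. -/
noncomputable section

open Real

/-- Bernoulli inequality for exponents `p ≤ 0` or `1 ≤ p`. -/
lemma bern_aux {p : ℝ} (hp : p ≤ 0 ∨ 1 ≤ p) {y : ℝ} (hy : 0 < y) :
    1 + p * (y - 1) ≤ y ^ p := by
  rcases hp with hp | hp
  · have h1 : -1 ≤ 1 / y - 1 := by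
      have : 0 < 1 / y := by positivity
      linarith
    have h2 : (1:ℝ) ≤ 1 - p := by linarith
    have h := one_add_mul_self_le_rpow_one_add h1 h2
    have he : (1 + (1 / y - 1)) = 1 / y := by ring
    rw [he] at h
    have hinv : (1 / y) ^ (1 - p) = (y ^ (1 - p))⁻¹ := by
      rw [one_div, Real.inv_rpow hy.le]
    rw [hinv] at h
    -- multiply both sides by y^(1-p) > 0 and y
    have hyp : 0 < y ^ (1 - p) := rpow_pos_of_pos hy _
    have h3 : (1 + (1 - p) * (1 / y - 1)) * y ^ (1 - p) ≤ 1 := by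
      calc (1 + (1 - p) * (1 / y - 1)) * y ^ (1 - p)
          ≤ (y ^ (1 - p))⁻¹ * y ^ (1 - p) := by
            apply mul_le_mul_of_nonneg_right h hyp.le
        _ = 1 := inv_mul_cancel₀ hyp.ne'
    -- y^p = y / y^(1-p)
    have h4 : y ^ p = y / y ^ (1 - p) := by
      have h4' : y ^ p * y ^ (1 - p) = y := by
        rw [← Real.rpow_add hy]; norm_num
      rw [eq_div_iff hyp.ne', h4']
    rw [h4, le_div_iff₀ hyp]
    have h5 : (1 + (1 - p) * (1 / y - 1)) = (1/y) * (y + (1 - p) * (1 - y)) := by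
      field_simp <;> ring
    have h6 : (1 + p * (y - 1)) * y ^ (1 - p) ≤ (y + (1-p)*(1-y)) * y ^ (1 - p) := by
      apply mul_le_mul_of_nonneg_right _ hyp.le
      have : 1/y * y = 1 := by field_simp
      nlinarith
    calc (1 + p * (y - 1)) * y ^ (1 - p) ≤ (y + (1-p)*(1-y)) * y ^ (1 - p) := h6
      _ = ((1/y) * (y + (1-p)*(1-y))) * y ^ (1-p) * y := by field_simp <;> ring
      _ = (1 + (1 - p) * (1 / y - 1)) * y ^ (1 - p) * y := by rw [h5]
      _ ≤ 1 * y := by apply mul_le_mul_of_nonneg_right h3 hy.le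
      _ = y := one_mul y
  · have h1 : -1 ≤ y - 1 := by linarith
    have h := one_add_mul_self_le_rpow_one_add h1 hp
    have he : (1 + (y - 1)) = y := by ring
    rwa [he] at h

/-- Tangent-line inequality for rpow at a general point. -/
lemma tangent_aux {p : ℝ} (hp : p ≤ 0 ∨ 1 ≤ p) {x y : ℝ} (hx : 0 < x) (hy : 0 < y) :
    x ^ p + p * x ^ (p - 1) * (y - x) ≤ y ^ p := by
  have h := bern_aux hp (y := y / x) (by positivity)
  have hd : (y / x) ^ p = y ^ p / x ^ p := Real.div_rpow hy.le hx.le p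
  rw [hd] at h
  have hxp : 0 < x ^ p := rpow_pos_of_pos hx _
  have h2 : (1 + p * (y / x - 1)) * x ^ p ≤ y ^ p := by
    rw [← le_div_iff₀ hxp]
    exact h
  have h3 : (1 + p * (y / x - 1)) * x ^ p = x ^ p + p * (x ^ p / x) * (y - x) := by
    field_simp <;> ring
  rw [h3] at h2
  rwa [Real.rpow_sub_one hx.ne']

/-- `gq` is nonneg. -/
lemma gq_nonneg {q : ℝ} (hq : q < 0 ∨ 1 < q) {y : ℝ} (hy : 0 < y) : 0 ≤ gq q y := by
  have h := bern_aux (p := q) (hq.imp le_of_lt le_of_lt) hy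
  unfold gq; linarith

set_option maxHeartbeats 1000000 in
/-- **Lemma B.3**: for `q ∈ (-∞,0) ∪ (1,∞)` there is `C = C(q) > 0` with
`min((y-1)², |y-1|) ≤ C g_q(y)` for all `y > 0`. -/
theorem stmt10 (q : ℝ) (hq : q < 0 ∨ 1 < q) :
    ∃ C > 0, ∀ y : ℝ, 0 < y → min ((y - 1) ^ 2) |y - 1| ≤ C * gq q y := by
  have hq' : q ≤ 0 ∨ 1 ≤ q := hq.imp le_of_lt le_of_lt
  have hqq : 0 < q * (q - 1) := by rcases hq with h | h <;> nlinarith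
  obtain ⟨c, hc_def⟩ : ∃ x : ℝ,
      x = q * (q - 1) * min ((2:ℝ) ^ (q - 2)) (min (((2:ℝ)⁻¹) ^ (q - 2)) 1) := ⟨_, rfl⟩
  have hT2 : (0:ℝ) < (2:ℝ) ^ (q - 2) := Real.rpow_pos_of_pos two_pos _
  have hT2' : (0:ℝ) < ((2:ℝ)⁻¹) ^ (q - 2) := Real.rpow_pos_of_pos (by norm_num) _
  have hc : 0 < c := hc_def ▸ mul_pos hqq (lt_min hT2 (lt_min hT2' one_pos))
  have hc1 : c ≤ q * (q - 1) * ((2:ℝ) ^ (q - 2)) :=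
    hc_def ▸ mul_le_mul_of_nonneg_left (min_le_left _ _) hqq.le
  have hc2 : c ≤ q * (q - 1) * (((2:ℝ)⁻¹) ^ (q - 2)) :=
    hc_def ▸ mul_le_mul_of_nonneg_left ((min_le_right _ _).trans (min_le_left _ _)) hqq.le
  have hc3 : c ≤ q * (q - 1) :=
    hc_def ▸ (mul_le_mul_of_nonneg_left ((min_le_right _ _).trans (min_le_right _ _)) hqq.le).trans
      (by rw [mul_one])
  obtain ⟨s, hs_def⟩ : ∃ x : ℝ, x = q * ((2:ℝ) ^ (q - 1) - 1) := ⟨_, rfl⟩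
  have hs : 0 < s := by
    rcases hq with h | h
    · have h2 : (2:ℝ) ^ (q - 1) < 1 :=
        Real.rpow_lt_one_of_one_lt_of_neg one_lt_two (by linarith)
      have h3 : 0 < (-q) * (1 - (2:ℝ) ^ (q - 1)) := mul_pos (by linarith) (by linarith)
      rw [hs_def]; nlinarith
    · have h2 : (1:ℝ) < (2:ℝ) ^ (q - 1) :=
        (Real.one_lt_rpow_iff_of_pos two_pos).mpr (Or.inl ⟨one_lt_two, by linarith⟩)
      have h3 : 0 < q * ((2:ℝ) ^ (q - 1) - 1) := mul_pos (by linarith) (by linarith)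
      rw [hs_def]; exact h3
  -- Key one-sided bounds on the derivative q (z^(q-1) - 1)
  have hD : ∀ z : ℝ, 1 ≤ z → z ≤ 2 → c * (z - 1) ≤ q * (z ^ (q - 1) - 1) := by
    intro z h1 h2
    have hz0 : (0:ℝ) < z := by linarith
    have h1z : (0:ℝ) ≤ z - 1 := by linarith
    rcases hq with hneg | hpos
    · -- q < 0 : tangent at z for exponent q-1 ≤ 0, evaluated at 1
      have t := tangent_aux (p := q - 1) (Or.inl (by linarith)) hz0 one_pos
      rw [Real.one_rpow, show q - 1 - 1 = q - 2 by ring] at t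
      have hB : (2:ℝ) ^ (q - 2) ≤ z ^ (q - 2) :=
        Real.rpow_le_rpow_of_nonpos hz0 h2 (by linarith)
      have H1 := mul_le_mul_of_nonpos_left t (le_of_lt hneg)
      have H2 := mul_le_mul_of_nonneg_left (mul_le_mul_of_nonneg_right hB h1z) hqq.le
      have H3 := mul_le_mul_of_nonneg_right hc1 h1z
      linarith [H1, H2, H3]
    · rcases le_or_gt 2 q with h2q | h2q
      · -- q ≥ 2 : Bernoulli for exponent q-1 ≥ 1 at 1
        have t := bern_aux (p := q - 1) (Or.inr (by linarith)) hz0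
        have H1 := mul_le_mul_of_nonneg_left t (by linarith : (0:ℝ) ≤ q)
        have H3 := mul_le_mul_of_nonneg_right hc3 h1z
        linarith [H1, H3]
      · -- 1 < q < 2 : concave Bernoulli for exponent q-1 ∈ (0,1) at 1/z, scaled
        have hinv : (0:ℝ) < 1 / z := by positivity
        have t := rpow_one_add_le_one_add_mul_self
          (s := 1 / z - 1) (p := q - 1) (by linarith) (by linarith) (by linarith)
        rw [show (1:ℝ) + (1 / z - 1) = 1 / z by ring] at t
        have hiz : (1 / z) ^ (q - 1) = (z ^ (q - 1))⁻¹ := by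
          rw [one_div, Real.inv_rpow hz0.le]
        rw [hiz] at t
        have hA : (0:ℝ) < z ^ (q - 1) := Real.rpow_pos_of_pos hz0 _
        have t2 : (1:ℝ) ≤ z ^ (q - 1) + (q - 1) * z ^ (q - 2) * (1 - z) := by
          have h0 := mul_le_mul_of_nonneg_right t hA.le
          rw [inv_mul_cancel₀ hA.ne'] at h0
          have hz1 : z ^ (q - 2) * z = z ^ (q - 1) := by
            rw [← Real.rpow_add_one hz0.ne' (q - 2), show q - 2 + 1 = q - 1 by ring]
          have heq : (1 + (q - 1) * (1 / z - 1)) * z ^ (q - 1)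
              = z ^ (q - 1) + (q - 1) * z ^ (q - 2) * (1 - z) := by
            rw [← hz1]
            field_simp
          rw [heq] at h0
          exact h0
        have hB : (2:ℝ) ^ (q - 2) ≤ z ^ (q - 2) :=
          Real.rpow_le_rpow_of_nonpos hz0 h2 (by linarith)
        have H1 := mul_le_mul_of_nonneg_left t2 (by linarith : (0:ℝ) ≤ q)
        have H2 := mul_le_mul_of_nonneg_left (mul_le_mul_of_nonneg_right hB h1z) hqq.le
        have H3 := mul_le_mul_of_nonneg_right hc1 h1z
        linarith [H1, H2, H3]
  have hE : ∀ z : ℝ, 1/2 ≤ z → z ≤ 1 → q * (z ^ (q - 1) - 1) ≤ c * (z - 1) := by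
    intro z h1 h2
    have hz0 : (0:ℝ) < z := by linarith
    have h1z : z - 1 ≤ 0 := by linarith
    rcases hq with hneg | hpos
    · -- q < 0 : Bernoulli exponent q-1 ≤ 0 at 1, multiplied by q < 0
      have t := bern_aux (p := q - 1) (Or.inl (by linarith)) hz0
      have H1 := mul_le_mul_of_nonpos_left t (le_of_lt hneg)
      have H3 := mul_le_mul_of_nonpos_right hc3 h1z
      linarith [H1, H3]
    · rcases le_or_gt 2 q with h2q | h2q
      · -- q ≥ 2 : tangent at z for exponent q-1 ≥ 1, evaluated at 1
        have t := tangent_aux (p := q - 1) (Or.inr (by linarith)) hz0 one_pos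
        rw [Real.one_rpow, show q - 1 - 1 = q - 2 by ring] at t
        have hB : ((2:ℝ)⁻¹) ^ (q - 2) ≤ z ^ (q - 2) :=
          Real.rpow_le_rpow (by norm_num) (by linarith) (by linarith)
        have H1 := mul_le_mul_of_nonneg_left t (by linarith : (0:ℝ) ≤ q)
        have H2 := mul_le_mul_of_nonneg_left (mul_le_mul_of_nonpos_right hB h1z) hqq.le
        have H3 := mul_le_mul_of_nonpos_right hc2 h1z
        linarith [H1, H2, H3]
      · -- 1 < q < 2 : concave Bernoulli at 1
        have t := rpow_one_add_le_one_add_mul_self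
          (s := z - 1) (p := q - 1) (by linarith) (by linarith) (by linarith)
        rw [show (1:ℝ) + (z - 1) = z by ring] at t
        have H1 := mul_le_mul_of_nonneg_left t (by linarith : (0:ℝ) ≤ q)
        have H3 := mul_le_mul_of_nonpos_right hc3 h1z
        linarith [H1, H3]
  -- midpoint inequality
  have hMid : ∀ y : ℝ, 0 < y →
      q * (((1 + y) / 2) ^ (q - 1) - 1) * ((y - 1) / 2) ≤ gq q y := by
    intro y hy
    have hm : (0:ℝ) < (1 + y) / 2 := by linarith
    have t1 := tangent_aux hq' hm hy
    have t2 := bern_aux hq' hm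
    unfold gq
    linarith [t1, t2]
  refine ⟨max (4 / c) (2 / s), lt_of_lt_of_le (div_pos four_pos hc) (le_max_left _ _), ?_⟩
  intro y hy
  have hg : 0 ≤ gq q y := gq_nonneg hq hy
  have hmax1 : 4 / c ≤ max (4 / c) (2 / s) := le_max_left _ _
  have hmax2 : 2 / s ≤ max (4 / c) (2 / s) := le_max_right _ _
  rcases le_or_gt y 3 with h3 | h3
  · -- quadratic regime
    have mid := hMid y hy
    have key : c * ((y - 1) / 2) * ((y - 1) / 2) ≤ gq q y := by
      rcases le_or_gt 1 y with h1 | h1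
      · have hd := hD ((1 + y) / 2) (by linarith) (by linarith)
        have H := mul_le_mul_of_nonneg_right hd (by linarith : (0:ℝ) ≤ (y - 1) / 2)
        linarith [H, mid]
      · have he := hE ((1 + y) / 2) (by linarith) (by linarith)
        have H := mul_le_mul_of_nonpos_right he (by linarith : (y - 1) / 2 ≤ 0)
        linarith [H, mid]
    have h4 : (y - 1) ^ 2 ≤ (4 / c) * gq q y := by
      rw [div_mul_eq_mul_div, le_div_iff₀ hc]
      linarith [key]
    calc min ((y - 1) ^ 2) |y - 1| ≤ (y - 1) ^ 2 := min_le_left _ _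
      _ ≤ (4 / c) * gq q y := h4
      _ ≤ max (4 / c) (2 / s) * gq q y := mul_le_mul_of_nonneg_right hmax1 hg
  · -- linear regime, y > 3
    have hm2 : (2:ℝ) ≤ (1 + y) / 2 := by linarith
    have mid := hMid y hy
    have hsM : s ≤ q * (((1 + y) / 2) ^ (q - 1) - 1) := by
      rcases hq with hneg | hpos
      · have hB : ((1 + y) / 2) ^ (q - 1) ≤ (2:ℝ) ^ (q - 1) :=
          Real.rpow_le_rpow_of_nonpos two_pos hm2 (by linarith)
        have H := mul_le_mul_of_nonpos_left hB (le_of_lt hneg)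
        rw [hs_def]; nlinarith [H]
      · have hB : (2:ℝ) ^ (q - 1) ≤ ((1 + y) / 2) ^ (q - 1) :=
          Real.rpow_le_rpow (by norm_num) hm2 (by linarith)
        have H := mul_le_mul_of_nonneg_left hB (by linarith : (0:ℝ) ≤ q)
        rw [hs_def]; nlinarith [H]
    have hlin : s * ((y - 1) / 2) ≤ gq q y :=
      le_trans (mul_le_mul_of_nonneg_right hsM (by linarith : (0:ℝ) ≤ (y - 1) / 2)) mid
    have h5 : |y - 1| ≤ (2 / s) * gq q y := by
      rw [abs_of_nonneg (by linarith : (0:ℝ) ≤ y - 1), div_mul_eq_mul_div, le_div_iff₀ hs]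
      linarith [hlin]
    calc min ((y - 1) ^ 2) |y - 1| ≤ |y - 1| := min_le_right _ _
      _ ≤ (2 / s) * gq q y := h5
      _ ≤ max (4 / c) (2 / s) * gq q y := mul_le_mul_of_nonneg_right hmax2 hg
end
end
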